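/- Let ρ = Σ_j p_j P_j where the P_j are pairwise orthogonal Hermitian projections (P_j² = P_j, P_j† = P_j, P_j P_k = 0 for j ≠ k) and p_j are nonnegative reals, and let L be a linear map on matrices satisfying detailed balance with respect to ρ. Then for all indices i, j and all real t, the classical detailed-balance relation holds: p_j · tr(P_j · exp(tL)(P_i)) = p_i · tr(P_i · exp(tL)(P_j)). -/

import Mathlib

open Matrix
open scoped ComplexOrder

/-- The exponential `exp (t • L)` of the linear map `t • L` on matrices, applied to a matrix `A`;
it is given by the usual exponential power series `∑ (t • L)^k A / k!`. -/
noncomputable def expSemigroup {n : Type*} [Fintype n] [DecidableEq n]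
    (L : Module.End ℂ (Matrix n n ℂ)) (t : ℝ) (A : Matrix n n ℂ) : Matrix n n ℂ :=
  ∑' k : ℕ, (k.factorial : ℂ)⁻¹ • (((t : ℂ) • L) ^ k) A

section aux

variable {n : Type*} [Fintype n] [DecidableEq n]

noncomputable local instance : NormedAddCommGroup (Matrix n n ℂ) :=
  { Matrix.normedAddCommGroup with
    toMetricSpace :=
      (Matrix.normedAddCommGroup (m := n) (n := n) (α := ℂ)).toMetricSpace.replaceTopology rfl }

noncomputable local instance : NormedSpace ℂ (Matrix n n ℂ) :=
  { (Matrix.normedSpace : NormedSpace ℂ (Matrix n n ℂ)) with }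

lemma db_pow (ρ : Matrix n n ℂ) (L : Module.End ℂ (Matrix n n ℂ))
    (hdb : ∀ A B : Matrix n n ℂ, (ρ * L A * B).trace = (ρ * A * L B).trace) :
    ∀ (k : ℕ) (A B : Matrix n n ℂ), (ρ * (L ^ k) A * B).trace = (ρ * A * (L ^ k) B).trace := by
  intro k
  induction k with
  | zero => intro A B; simp
  | succ k ih =>
    intro A B
    have h1 : (L ^ (k + 1)) A = (L ^ k) (L A) := by
      rw [pow_succ]; rfl
    have h2 : (L ^ (k + 1)) B = L ((L ^ k) B) := by
      rw [pow_succ']; rfl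
    rw [h1, h2, ih (L A) B, hdb A ((L ^ k) B)]

set_option maxHeartbeats 1000000 in
lemma db_exp (ρ : Matrix n n ℂ) (L : Module.End ℂ (Matrix n n ℂ))
    (hdb : ∀ A B : Matrix n n ℂ, (ρ * L A * B).trace = (ρ * A * L B).trace)
    (t : ℝ) (A B : Matrix n n ℂ) :
    (ρ * expSemigroup L t A * B).trace = (ρ * A * expSemigroup L t B).trace := by
  set T : Matrix n n ℂ →L[ℂ] Matrix n n ℂ :=
    LinearMap.toContinuousLinearMap ((t : ℂ) • L) with hT
  have hTk : ∀ (k : ℕ) (X : Matrix n n ℂ), (T ^ k) X = (((t : ℂ) • L) ^ k) X := by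
    intro k
    induction k with
    | zero => intro X; simp
    | succ k ih =>
      intro X
      rw [pow_succ, pow_succ]
      simp only [ContinuousLinearMap.mul_apply, Module.End.mul_apply]
      rw [ih]
      rfl
  have hsumT : Summable fun k : ℕ => ((k.factorial : ℂ)⁻¹ : ℂ) • T ^ k :=
    NormedSpace.expSeries_summable' (𝕂 := ℂ) T
  have hsum : ∀ X : Matrix n n ℂ,
      Summable fun k : ℕ => (k.factorial : ℂ)⁻¹ • (((t : ℂ) • L) ^ k) X := by
    intro X
    have := hsumT.map (ContinuousLinearMap.apply ℂ (Matrix n n ℂ) X)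
      (ContinuousLinearMap.apply ℂ (Matrix n n ℂ) X).continuous
    refine this.congr fun k => ?_
    simp [Function.comp, ContinuousLinearMap.apply_apply, hTk]
  -- left continuous linear functional
  set Φ : Matrix n n ℂ →L[ℂ] ℂ := LinearMap.toContinuousLinearMap
    { toFun := fun X => (ρ * X * B).trace
      map_add' := by intro X Y; simp [Matrix.mul_add, Matrix.add_mul, Matrix.trace_add]
      map_smul' := by intro c X; simp [Matrix.mul_smul, Matrix.smul_mul] } with hΦ
  set Ψ : Matrix n n ℂ →L[ℂ] ℂ := LinearMap.toContinuousLinearMap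
    { toFun := fun X => (ρ * A * X).trace
      map_add' := by intro X Y; simp [Matrix.mul_add, Matrix.trace_add]
      map_smul' := by intro c X; simp [Matrix.mul_smul] } with hΨ
  have hL : (ρ * expSemigroup L t A * B).trace = Φ (expSemigroup L t A) := by simp [Φ, Ψ, hΦ, hΨ]
  have hR : (ρ * A * expSemigroup L t B).trace = Ψ (expSemigroup L t B) := by simp [Φ, Ψ, hΦ, hΨ]
  rw [hL, hR, expSemigroup, expSemigroup, Φ.map_tsum (hsum A), Ψ.map_tsum (hsum B)]
  congr 1
  funext k
  show (ρ * ((k.factorial : ℂ)⁻¹ • (((t:ℂ) • L) ^ k) A) * B).trace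
      = (ρ * A * ((k.factorial : ℂ)⁻¹ • (((t:ℂ) • L) ^ k) B)).trace
  have hsp : ∀ X : Matrix n n ℂ, (((t:ℂ) • L) ^ k) X = (t:ℂ)^k • (L ^ k) X := by
    intro X
    rw [smul_pow]
    rfl
  rw [hsp, hsp, smul_comm, smul_comm]
  simp only [Matrix.mul_smul, Matrix.smul_mul, Matrix.trace_smul]
  rw [db_pow ρ L hdb k A B]

end aux

/-- If `ρ = ∑ j, p j • P j` with `P j` pairwise orthogonal Hermitian projections and `p j ≥ 0`,
and `L` satisfies detailed balance with respect to `ρ`, then the classical detailed-balance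
relation `p j · tr(P j · exp(tL)(P i)) = p i · tr(P i · exp(tL)(P j))` holds. -/
theorem classical_detailed_balance_of_detailed_balance
    {n : Type*} [Fintype n] [DecidableEq n] [Nonempty n]
    {ι : Type*} [Fintype ι]
    (p : ι → ℝ) (hp : ∀ j, 0 ≤ p j)
    (P : ι → Matrix n n ℂ)
    (hproj : ∀ j, P j * P j = P j)
    (hherm : ∀ j, (P j)ᴴ = P j)
    (horth : ∀ j k, j ≠ k → P j * P k = 0)
    (ρ : Matrix n n ℂ) (hρ : ρ = ∑ j, (p j : ℂ) • P j)
    (L : Module.End ℂ (Matrix n n ℂ))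
    (hdb : ∀ A B : Matrix n n ℂ, (ρ * L A * B).trace = (ρ * A * L B).trace) :
    ∀ (i j : ι) (t : ℝ),
      (p j : ℂ) * (P j * expSemigroup L t (P i)).trace
        = (p i : ℂ) * (P i * expSemigroup L t (P j)).trace := by
  intro i j t
  have hPρ : ∀ k, P k * ρ = (p k : ℂ) • P k := by
    intro k
    rw [hρ, Finset.mul_sum]
    rw [Finset.sum_eq_single k]
    · rw [Matrix.mul_smul, hproj]
    · intro m _ hm
      rw [Matrix.mul_smul, horth k m (Ne.symm hm), smul_zero]
    · intro h; exact absurd (Finset.mem_univ k) h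
  have hρP : ∀ k, ρ * P k = (p k : ℂ) • P k := by
    intro k
    rw [hρ, Finset.sum_mul]
    rw [Finset.sum_eq_single k]
    · rw [Matrix.smul_mul, hproj]
    · intro m _ hm
      rw [Matrix.smul_mul, horth m k hm, smul_zero]
    · intro h; exact absurd (Finset.mem_univ k) h
  have key := db_exp ρ L hdb t (P i) (P j)
  calc (p j : ℂ) * (P j * expSemigroup L t (P i)).trace
      = (((p j : ℂ) • P j) * expSemigroup L t (P i)).trace := by
        rw [Matrix.smul_mul, Matrix.trace_smul, smul_eq_mul]
    _ = ((P j * ρ) * expSemigroup L t (P i)).trace := by rw [hPρ]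
    _ = (ρ * expSemigroup L t (P i) * P j).trace := by
        rw [Matrix.mul_assoc, Matrix.trace_mul_comm, Matrix.mul_assoc]
    _ = (ρ * P i * expSemigroup L t (P j)).trace := key
    _ = (((p i : ℂ) • P i) * expSemigroup L t (P j)).trace := by rw [hρP]
    _ = (p i : ℂ) * (P i * expSemigroup L t (P j)).trace := by
        rw [Matrix.smul_mul, Matrix.trace_smul, smul_eq_mul]
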